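/- Let m ≥ 1, τ ≥ 0, and let x : Fin m → ℝ with δ̂ = max_{i,j} |x_i − x_j| > 0. Then max_i x_i − g_x(τ) ≥ δ̂ / (m · exp(τ · δ̂)). -/

import Mathlib

/-- The softmax-weighted value `g_x(τ) = (∑ i, exp(τ·x_i)·x_i) / (∑ i, exp(τ·x_i))`. -/
noncomputable def gval {m : ℕ} (x : Fin m → ℝ) (τ : ℝ) : ℝ :=
  (∑ i, Real.exp (τ * x i) * x i) / (∑ i, Real.exp (τ * x i))

/-- The maximum coordinate of `x : Fin m → ℝ`, for `m ≥ 1`. -/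
noncomputable def maxVal {m : ℕ} (hm : 1 ≤ m) (x : Fin m → ℝ) : ℝ :=
  Finset.univ.sup' ⟨⟨0, hm⟩, Finset.mem_univ _⟩ x

/-- The largest distance between coordinates of `x`: `δ̂ = max_{i,j} |x_i − x_j|`. -/
noncomputable def deltaHat {m : ℕ} (hm : 1 ≤ m) (x : Fin m → ℝ) : ℝ :=
  Finset.univ.sup' ⟨(⟨0, hm⟩, ⟨0, hm⟩), Finset.mem_univ _⟩
    (fun p : Fin m × Fin m => |x p.1 - x p.2|)

/-- Lower bound on the gap between the max and the softmax-weighted value: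
if `δ̂ = max_{i,j} |x_i − x_j| > 0`, then
`max_i x_i − g_x(τ) ≥ δ̂ / (m · exp(τ·δ̂))`. -/
theorem max_sub_softmax_lower_bound
    {m : ℕ} (hm : 1 ≤ m) (τ : ℝ) (hτ : 0 ≤ τ) (x : Fin m → ℝ)
    (hpos : 0 < deltaHat hm x) :
    maxVal hm x - gval x τ ≥
      deltaHat hm x / ((m : ℝ) * Real.exp (τ * deltaHat hm x)) := by
  have hne : (Finset.univ : Finset (Fin m)).Nonempty := ⟨⟨0, hm⟩, Finset.mem_univ _⟩
  obtain ⟨a, -, ha⟩ := Finset.exists_mem_eq_sup' hne x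
  obtain ⟨b, -, hb⟩ := Finset.exists_mem_eq_inf' hne x
  have hmax : maxVal hm x = x a := ha
  have hxa : ∀ i, x i ≤ x a := fun i => hmax ▸ Finset.le_sup' x (Finset.mem_univ i)
  have hxb : ∀ i, x b ≤ x i := fun i => hb ▸ Finset.inf'_le x (Finset.mem_univ i)
  have hδ : deltaHat hm x = x a - x b := by
    apply le_antisymm
    · apply Finset.sup'_le
      intro p _
      rw [abs_le]
      constructor
      · have := hxa p.2; have := hxb p.1; linarith
      · have := hxa p.1; have := hxb p.2; linarith
    · calc x a - x b ≤ |x a - x b| := le_abs_self _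
        _ ≤ _ := Finset.le_sup' (fun p : Fin m × Fin m => |x p.1 - x p.2|)
            (Finset.mem_univ (a, b))
  set S := ∑ i, Real.exp (τ * x i) with hS
  have hSpos : 0 < S := Finset.sum_pos (fun i _ => Real.exp_pos _) hne
  have hgap : maxVal hm x - gval x τ =
      (∑ i, Real.exp (τ * x i) * (x a - x i)) / S := by
    rw [hmax, gval]
    have h1 : ∑ i, Real.exp (τ * x i) * (x a - x i) =
        S * x a - ∑ i, Real.exp (τ * x i) * x i := by
      simp only [mul_sub]
      rw [Finset.sum_sub_distrib, ← Finset.sum_mul, ← hS]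
    rw [h1, sub_div, mul_comm, mul_div_assoc, div_self hSpos.ne', mul_one]
  have hnum : Real.exp (τ * x b) * (x a - x b) ≤
      ∑ i, Real.exp (τ * x i) * (x a - x i) := by
    apply Finset.single_le_sum (f := fun i => Real.exp (τ * x i) * (x a - x i))
      (fun i _ => mul_nonneg (Real.exp_pos _).le (by have := hxa i; linarith))
      (Finset.mem_univ b)
  have hden : S ≤ (m : ℝ) * Real.exp (τ * x a) := by
    calc S ≤ ∑ _i : Fin m, Real.exp (τ * x a) := by
          apply Finset.sum_le_sum
          intro i _
          exact Real.exp_le_exp.2 (mul_le_mul_of_nonneg_left (hxa i) hτ)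
      _ = (m : ℝ) * Real.exp (τ * x a) := by
          rw [Finset.sum_const, Finset.card_univ, Fintype.card_fin, nsmul_eq_mul]
  have hkey : deltaHat hm x / ((m : ℝ) * Real.exp (τ * deltaHat hm x)) =
      (Real.exp (τ * x b) * (x a - x b)) / ((m : ℝ) * Real.exp (τ * x a)) := by
    rw [hδ, show τ * (x a - x b) = τ * x a - τ * x b by ring, Real.exp_sub]
    have hm0 : (m : ℝ) ≠ 0 := by positivity
    field_simp
  rw [hgap, hkey, ge_iff_le]
  have h0 : 0 ≤ Real.exp (τ * x b) * (x a - x b) :=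
    mul_nonneg (Real.exp_pos _).le (by rw [hδ] at hpos; linarith)
  exact div_le_div₀ (le_trans h0 hnum) hnum hSpos hden
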